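/- In any compository, composition is associative: for a triple $(A,B,C) \in \mathcal{C}(l) \times \mathcal{C}(m) \times \mathcal{C}(n)$ with $At_j = Bs_j$ and $Bt_k = Cs_k$, the pairs $(A, B \circ_k C)$ and $(A \circ_j B, C)$ are $j$- and $k$-composable respectively, and $A \circ_j (B \circ_k C) = (A \circ_j B) \circ_k C$. -/

import Mathlib

open CategoryTheory Opposite

namespace Compo

/-- The object `[n]` of the simplex category. -/
abbrev sobj (n : ℕ) : SimplexCategory := SimplexCategory.mk n

/-- The "initial face" map `s_k : [k] → [n]`, `v ↦ v`. -/
def srcHom (k n : ℕ) (h : k ≤ n) : sobj k ⟶ sobj n :=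
  SimplexCategory.mkHom
    ⟨fun v => ⟨v.1, by have := v.isLt; omega⟩, fun a b hab => Fin.mk_le_mk.mpr hab⟩

/-- The "terminal face" map `t_k : [k] → [n]`, `v ↦ v + n - k`. -/
def tgtHom (k n : ℕ) (h : k ≤ n) : sobj k ⟶ sobj n :=
  SimplexCategory.mkHom
    ⟨fun v => ⟨v.1 + (n - k), by have := v.isLt; omega⟩, fun a b hab => by
      simp only [Fin.le_def] at hab ⊢; omega⟩

/-- A compository: a simplicial set equipped with compositions of `k`-composable
pairs, satisfying the identity axiom, the back-and-forth axiom, and compatibility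
with degeneracy and face maps. The dimension `N` of the composite satisfies
`m + n = N + k`. -/
structure Compository where
  X : SSet.{0}
  comp : ∀ {m n k N : ℕ} (hm : k ≤ m) (hn : k ≤ n) (_ : m + n = N + k)
    (A : X.obj (op (sobj m))) (B : X.obj (op (sobj n))),
    X.map (tgtHom k m hm).op A = X.map (srcHom k n hn).op B → X.obj (op (sobj N))
  /-- Identity axiom: `As_k ∘_k A = A`. -/
  id_left : ∀ {m k : ℕ} (hm : k ≤ m) (A : X.obj (op (sobj m))) h,
    comp (le_refl k) hm (by omega) (X.map (srcHom k m hm).op A) A h = A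
  /-- Identity axiom: `A ∘_k At_k = A`. -/
  id_right : ∀ {m k : ℕ} (hm : k ≤ m) (A : X.obj (op (sobj m))) h,
    comp hm (le_refl k) (by omega) A (X.map (tgtHom k m hm).op A) h = A
  /-- Back-and-forth axiom: `(A ∘_k B)s_{m+i} ∘_{k+i} B = A ∘_k B` for `i ≤ n - k`. -/
  back_forth_left : ∀ {m n k N : ℕ} (hm : k ≤ m) (hn : k ≤ n) (hN : m + n = N + k)
    (i : ℕ) (hi : i ≤ n - k)
    (A : X.obj (op (sobj m))) (B : X.obj (op (sobj n)))
    (hAB : X.map (tgtHom k m hm).op A = X.map (srcHom k n hn).op B)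
    (h : X.map (tgtHom (k + i) (m + i) (by omega)).op
      (X.map (srcHom (m + i) N (by omega)).op (comp hm hn hN A B hAB))
      = X.map (srcHom (k + i) n (by omega)).op B),
    comp (show k + i ≤ m + i by omega) (show k + i ≤ n by omega)
      (show (m + i) + n = N + (k + i) by omega)
      (X.map (srcHom (m + i) N (by omega)).op (comp hm hn hN A B hAB)) B h
    = comp hm hn hN A B hAB
  /-- Back-and-forth axiom: `A ∘_{k+j} (A ∘_k B)t_{n+j} = A ∘_k B` for `j ≤ m - k`. -/
  back_forth_right : ∀ {m n k N : ℕ} (hm : k ≤ m) (hn : k ≤ n) (hN : m + n = N + k)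
    (j : ℕ) (hj : j ≤ m - k)
    (A : X.obj (op (sobj m))) (B : X.obj (op (sobj n)))
    (hAB : X.map (tgtHom k m hm).op A = X.map (srcHom k n hn).op B)
    (h : X.map (tgtHom (k + j) m (by omega)).op A
      = X.map (srcHom (k + j) (n + j) (by omega)).op
        (X.map (tgtHom (n + j) N (by omega)).op (comp hm hn hN A B hAB))),
    comp (show k + j ≤ m by omega) (show k + j ≤ n + j by omega)
      (show m + (n + j) = N + (k + j) by omega)
      A (X.map (tgtHom (n + j) N (by omega)).op (comp hm hn hN A B hAB)) h
    = comp hm hn hN A B hAB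
  /-- `(A ∘_k B)η_i = Aη_i ∘_k B` for `i ≤ m - k`. -/
  comp_eta_low : ∀ {m n k N : ℕ} (hm : k ≤ m) (hn : k ≤ n) (hN : m + n = N + k)
    (i : ℕ) (hi : i ≤ m - k)
    (A : X.obj (op (sobj m))) (B : X.obj (op (sobj n)))
    (hAB : X.map (tgtHom k m hm).op A = X.map (srcHom k n hn).op B)
    (h : X.map (tgtHom k (m + 1) (by omega)).op
      (X.map (SimplexCategory.σ (⟨i, by omega⟩ : Fin (m + 1))).op A)
      = X.map (srcHom k n hn).op B),
    X.map (SimplexCategory.σ (⟨i, by omega⟩ : Fin (N + 1))).op (comp hm hn hN A B hAB)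
    = comp (show k ≤ m + 1 by omega) hn (show (m + 1) + n = (N + 1) + k by omega)
        (X.map (SimplexCategory.σ (⟨i, by omega⟩ : Fin (m + 1))).op A) B h
  /-- `(A ∘_k B)η_i = A ∘_k Bη_{i-m+k}` for `i ≥ m`. -/
  comp_eta_high : ∀ {m n k N : ℕ} (hm : k ≤ m) (hn : k ≤ n) (hN : m + n = N + k)
    (i : ℕ) (hi1 : m ≤ i) (hi2 : i ≤ N)
    (A : X.obj (op (sobj m))) (B : X.obj (op (sobj n)))
    (hAB : X.map (tgtHom k m hm).op A = X.map (srcHom k n hn).op B)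
    (h : X.map (tgtHom k m hm).op A
      = X.map (srcHom k (n + 1) (by omega)).op
        (X.map (SimplexCategory.σ (⟨i - m + k, by omega⟩ : Fin (n + 1))).op B)),
    X.map (SimplexCategory.σ (⟨i, by omega⟩ : Fin (N + 1))).op (comp hm hn hN A B hAB)
    = comp hm (show k ≤ n + 1 by omega) (show m + (n + 1) = (N + 1) + k by omega)
        A (X.map (SimplexCategory.σ (⟨i - m + k, by omega⟩ : Fin (n + 1))).op B) h
  /-- `(A ∘_k B)η_i = Aη_i ∘_{k+1} Bη_{i-m+k}` for `m - k ≤ i ≤ m`. -/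
  comp_eta_mid : ∀ {m n k N : ℕ} (hm : k ≤ m) (hn : k ≤ n) (hN : m + n = N + k)
    (i : ℕ) (hi1 : m - k ≤ i) (hi2 : i ≤ m)
    (A : X.obj (op (sobj m))) (B : X.obj (op (sobj n)))
    (hAB : X.map (tgtHom k m hm).op A = X.map (srcHom k n hn).op B)
    (h : X.map (tgtHom (k + 1) (m + 1) (by omega)).op
      (X.map (SimplexCategory.σ (⟨i, by omega⟩ : Fin (m + 1))).op A)
      = X.map (srcHom (k + 1) (n + 1) (by omega)).op
        (X.map (SimplexCategory.σ (⟨i - m + k, by omega⟩ : Fin (n + 1))).op B)),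
    X.map (SimplexCategory.σ (⟨i, by omega⟩ : Fin (N + 1))).op (comp hm hn hN A B hAB)
    = comp (show k + 1 ≤ m + 1 by omega) (show k + 1 ≤ n + 1 by omega)
        (show (m + 1) + (n + 1) = (N + 1) + (k + 1) by omega)
        (X.map (SimplexCategory.σ (⟨i, by omega⟩ : Fin (m + 1))).op A)
        (X.map (SimplexCategory.σ (⟨i - m + k, by omega⟩ : Fin (n + 1))).op B) h
  /-- `(A ∘_k B)∂_i = A∂_i ∘_k B` for `i < m - k` (here `A` is an `(m+1)`-simplex). -/
  comp_delta_low : ∀ {m n k N : ℕ} (hm : k ≤ m + 1) (hn : k ≤ n)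
    (hN : (m + 1) + n = (N + 1) + k)
    (i : ℕ) (hi : i < m + 1 - k)
    (A : X.obj (op (sobj (m + 1)))) (B : X.obj (op (sobj n)))
    (hAB : X.map (tgtHom k (m + 1) hm).op A = X.map (srcHom k n hn).op B)
    (h : X.map (tgtHom k m (by omega)).op
      (X.map (SimplexCategory.δ (⟨i, by omega⟩ : Fin (m + 2))).op A)
      = X.map (srcHom k n hn).op B),
    X.map (SimplexCategory.δ (⟨i, by omega⟩ : Fin (N + 2))).op (comp hm hn hN A B hAB)
    = comp (show k ≤ m by omega) hn (show m + n = N + k by omega)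
        (X.map (SimplexCategory.δ (⟨i, by omega⟩ : Fin (m + 2))).op A) B h
  /-- `(A ∘_k B)∂_i = A ∘_k B∂_{i-m+k}` for `i > m` (here `B` is an `(n+1)`-simplex). -/
  comp_delta_high : ∀ {m n k N : ℕ} (hm : k ≤ m) (hn : k ≤ n + 1)
    (hN : m + (n + 1) = (N + 1) + k)
    (i : ℕ) (hi1 : m < i) (hi2 : i ≤ N + 1)
    (A : X.obj (op (sobj m))) (B : X.obj (op (sobj (n + 1))))
    (hAB : X.map (tgtHom k m hm).op A = X.map (srcHom k (n + 1) hn).op B)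
    (h : X.map (tgtHom k m hm).op A
      = X.map (srcHom k n (by omega)).op
        (X.map (SimplexCategory.δ (⟨i - m + k, by omega⟩ : Fin (n + 2))).op B)),
    X.map (SimplexCategory.δ (⟨i, by omega⟩ : Fin (N + 2))).op (comp hm hn hN A B hAB)
    = comp hm (show k ≤ n by omega) (show m + n = N + k by omega)
        A (X.map (SimplexCategory.δ (⟨i - m + k, by omega⟩ : Fin (n + 2))).op B) h

end Compo
namespace Compo

lemma srcHom_comp {a b c : ℕ} (h1 : a ≤ b) (h2 : b ≤ c) :
    srcHom a b h1 ≫ srcHom b c h2 = srcHom a c (h1.trans h2) := by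
  apply SimplexCategory.Hom.ext
  ext v
  simp [srcHom, SimplexCategory.comp_toOrderHom, SimplexCategory.mkHom,
    SimplexCategory.Hom.toOrderHom_mk]
  rfl

lemma tgtHom_comp {a b c : ℕ} (h1 : a ≤ b) (h2 : b ≤ c) :
    tgtHom a b h1 ≫ tgtHom b c h2 = tgtHom a c (h1.trans h2) := by
  apply SimplexCategory.Hom.ext
  ext v
  simp [tgtHom, SimplexCategory.comp_toOrderHom, SimplexCategory.mkHom,
    SimplexCategory.Hom.toOrderHom_mk]
  change (v : ℕ) + (b - a) + (c - b) = v + (c - a)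
  omega

lemma srcHom_self {a : ℕ} (h : a ≤ a) : srcHom a a h = 𝟙 (sobj a) := by
  apply SimplexCategory.Hom.ext
  ext v
  simp [srcHom, SimplexCategory.mkHom, SimplexCategory.Hom.toOrderHom_mk,
    SimplexCategory.id_toOrderHom]
  rfl

lemma tgtHom_self {a : ℕ} (h : a ≤ a) : tgtHom a a h = 𝟙 (sobj a) := by
  apply SimplexCategory.Hom.ext
  ext v
  simp [tgtHom, SimplexCategory.mkHom, SimplexCategory.Hom.toOrderHom_mk,
    SimplexCategory.id_toOrderHom]

lemma srcHom_succ_top {a b : ℕ} (h : a ≤ b) (h' : a ≤ b + 1) :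
    srcHom a (b+1) h' = srcHom a b h ≫ SimplexCategory.δ ⟨b+1, by omega⟩ := by
  apply SimplexCategory.Hom.ext
  ext v
  simp [srcHom, SimplexCategory.δ, SimplexCategory.mkHom,
    SimplexCategory.Hom.toOrderHom_mk, SimplexCategory.comp_toOrderHom,
    Fin.succAbove, Fin.lt_def]
  split <;> simp <;> omega

lemma tgtHom_succ_bot {a b : ℕ} (h : a ≤ b) (h' : a ≤ b + 1) :
    tgtHom a (b+1) h' = tgtHom a b h ≫ SimplexCategory.δ ⟨0, by omega⟩ := by
  apply SimplexCategory.Hom.ext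
  ext v
  simp [tgtHom, SimplexCategory.δ, SimplexCategory.mkHom,
    SimplexCategory.Hom.toOrderHom_mk, SimplexCategory.comp_toOrderHom,
    Fin.succAbove, Fin.lt_def]
  change (v : ℕ) + (b + 1 - a) = v + (b - a) + 1
  omega

lemma comp_congr (𝒞 : Compository) {m n k N : ℕ} (hm : k ≤ m) (hn : k ≤ n)
    (hN : m + n = N + k) {A A' : 𝒞.X.obj (op (sobj m))} {B B' : 𝒞.X.obj (op (sobj n))}
    (hA : A = A') (hB : B = B') (h h') :
    𝒞.comp hm hn hN A B h = 𝒞.comp hm hn hN A' B' h' := by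
  subst hA hB; rfl

set_option maxHeartbeats 1600000 in
lemma src_gen (𝒞 : Compository) {m n k N p r : ℕ} (hm : k ≤ m) (hn : k ≤ n)
    (hN : m + n = N + k) (hp1 : k ≤ p) (hp2 : p ≤ n) (hr : r + k = m + p)
    (A : 𝒞.X.obj (op (sobj m))) (B : 𝒞.X.obj (op (sobj n)))
    (hAB : 𝒞.X.map (tgtHom k m hm).op A = 𝒞.X.map (srcHom k n hn).op B) (h') :
    𝒞.X.map (srcHom r N (by omega)).op (𝒞.comp hm hn hN A B hAB)
      = 𝒞.comp hm hp1 (show m + p = r + k by omega) A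
          (𝒞.X.map (srcHom p n hp2).op B) h' := by
  induction n, hp2 using Nat.le_induction generalizing N with
  | base =>
    obtain rfl : N = r := by omega
    simp only [srcHom_self, op_id, FunctorToTypes.map_id_apply]
  | succ n hpn IH =>
    obtain ⟨N', rfl⟩ : ∃ N', N = N' + 1 := ⟨N - 1, by omega⟩
    have hrN : r ≤ N' := by omega
    rw [srcHom_succ_top hrN, op_comp, FunctorToTypes.map_comp_apply]
    have hidx : (⟨N' + 1 - m + k, by omega⟩ : Fin (n + 2)) = ⟨n + 1, by omega⟩ :=
      Fin.ext (by simp; omega)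
    have hkn : k ≤ n := by omega
    have hB' : 𝒞.X.map (tgtHom k m hm).op A
        = 𝒞.X.map (srcHom k n hkn).op
            (𝒞.X.map (SimplexCategory.δ (⟨n + 1, by omega⟩ : Fin (n + 2))).op B) := by
      rw [← FunctorToTypes.map_comp_apply, ← op_comp, ← srcHom_succ_top hkn, hAB]
    rw [𝒞.comp_delta_high hm hn hN (N' + 1) (by omega) (by omega) A B hAB
      (by rw [hidx]; exact hB')]
    rw [comp_congr 𝒞 hm hkn (by omega) rfl
      (show 𝒞.X.map (SimplexCategory.δ (⟨N' + 1 - m + k, by omega⟩ : Fin (n + 2))).op B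
          = 𝒞.X.map (SimplexCategory.δ (⟨n + 1, by omega⟩ : Fin (n + 2))).op B
        by rw [hidx]) _ hB']
    rw [IH hkn (by omega) (𝒞.X.map (SimplexCategory.δ
        (⟨n + 1, by omega⟩ : Fin (n + 2))).op B) hB'
      (by
        have hnest : 𝒞.X.map (srcHom p (n + 1) (by omega)).op B
            = 𝒞.X.map (srcHom p n hpn).op
                (𝒞.X.map (SimplexCategory.δ (⟨n + 1, by omega⟩ : Fin (n + 2))).op B) := by
          rw [← FunctorToTypes.map_comp_apply, ← op_comp, ← srcHom_succ_top hpn]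
        exact hnest ▸ h')]
    refine comp_congr 𝒞 hm hp1 _ rfl ?_ _ h'
    rw [← FunctorToTypes.map_comp_apply, ← op_comp, ← srcHom_succ_top hpn]

set_option maxHeartbeats 1600000 in
lemma tgt_gen (𝒞 : Compository) {m n k N q r : ℕ} (hm : k ≤ m) (hn : k ≤ n)
    (hN : m + n = N + k) (hq1 : k ≤ q) (hq2 : q ≤ m) (hr : r + k = q + n)
    (A : 𝒞.X.obj (op (sobj m))) (B : 𝒞.X.obj (op (sobj n)))
    (hAB : 𝒞.X.map (tgtHom k m hm).op A = 𝒞.X.map (srcHom k n hn).op B) (h') :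
    𝒞.X.map (tgtHom r N (by omega)).op (𝒞.comp hm hn hN A B hAB)
      = 𝒞.comp hq1 hn (show q + n = r + k by omega)
          (𝒞.X.map (tgtHom q m hq2).op A) B h' := by
  induction m, hq2 using Nat.le_induction generalizing N with
  | base =>
    obtain rfl : N = r := by omega
    simp only [tgtHom_self, op_id, FunctorToTypes.map_id_apply]
  | succ m hqm IH =>
    obtain ⟨N', rfl⟩ : ∃ N', N = N' + 1 := ⟨N - 1, by omega⟩
    have hrN : r ≤ N' := by omega
    rw [tgtHom_succ_bot hrN, op_comp, FunctorToTypes.map_comp_apply]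
    have hkm : k ≤ m := by omega
    have hA' : 𝒞.X.map (tgtHom k m hkm).op
          (𝒞.X.map (SimplexCategory.δ (⟨0, by omega⟩ : Fin (m + 2))).op A)
        = 𝒞.X.map (srcHom k n hn).op B := by
      rw [← FunctorToTypes.map_comp_apply, ← op_comp, ← tgtHom_succ_bot hkm hm, hAB]
    rw [𝒞.comp_delta_low hm hn hN 0 (by omega) A B hAB hA']
    rw [IH hkm (by omega)
        (𝒞.X.map (SimplexCategory.δ (⟨0, by omega⟩ : Fin (m + 2))).op A) hA'
      (by
        have hnest : 𝒞.X.map (tgtHom q (m + 1) (by omega)).op A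
            = 𝒞.X.map (tgtHom q m hqm).op
                (𝒞.X.map (SimplexCategory.δ (⟨0, by omega⟩ : Fin (m + 2))).op A) := by
          rw [← FunctorToTypes.map_comp_apply, ← op_comp, ← tgtHom_succ_bot hqm]
        exact hnest ▸ h')]
    refine comp_congr 𝒞 hq1 hn _ ?_ rfl _ h'
    rw [← FunctorToTypes.map_comp_apply, ← op_comp, ← tgtHom_succ_bot hqm]

lemma fact_src (𝒞 : Compository) {m n k N : ℕ} (hm : k ≤ m) (hn : k ≤ n)
    (hN : m + n = N + k) (A : 𝒞.X.obj (op (sobj m))) (B : 𝒞.X.obj (op (sobj n)))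
    (hAB : 𝒞.X.map (tgtHom k m hm).op A = 𝒞.X.map (srcHom k n hn).op B) :
    𝒞.X.map (srcHom m N (by omega)).op (𝒞.comp hm hn hN A B hAB) = A := by
  have hy : 𝒞.X.map (tgtHom k m hm).op A
      = 𝒞.X.map (srcHom k k le_rfl).op (𝒞.X.map (tgtHom k m hm).op A) := by
    rw [srcHom_self, op_id, FunctorToTypes.map_id_apply]
  have hx : 𝒞.X.map (tgtHom k m hm).op A
      = 𝒞.X.map (srcHom k k le_rfl).op (𝒞.X.map (srcHom k n hn).op B) := by
    rw [srcHom_self, op_id, FunctorToTypes.map_id_apply]; exact hAB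
  rw [src_gen 𝒞 hm hn hN le_rfl hn (by omega) A B hAB hx,
      comp_congr 𝒞 hm le_rfl (by omega) rfl hAB.symm hx hy]
  exact 𝒞.id_right hm A hy

lemma fact_tgt (𝒞 : Compository) {m n k N : ℕ} (hm : k ≤ m) (hn : k ≤ n)
    (hN : m + n = N + k) (A : 𝒞.X.obj (op (sobj m))) (B : 𝒞.X.obj (op (sobj n)))
    (hAB : 𝒞.X.map (tgtHom k m hm).op A = 𝒞.X.map (srcHom k n hn).op B) :
    𝒞.X.map (tgtHom n N (by omega)).op (𝒞.comp hm hn hN A B hAB) = B := by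
  have hy : 𝒞.X.map (tgtHom k k le_rfl).op (𝒞.X.map (srcHom k n hn).op B)
      = 𝒞.X.map (srcHom k n hn).op B := by
    rw [tgtHom_self, op_id, FunctorToTypes.map_id_apply]
  have hx : 𝒞.X.map (tgtHom k k le_rfl).op (𝒞.X.map (tgtHom k m hm).op A)
      = 𝒞.X.map (srcHom k n hn).op B := by
    rw [tgtHom_self, op_id, FunctorToTypes.map_id_apply]; exact hAB
  rw [tgt_gen 𝒞 hm hn hN le_rfl hm (by omega) A B hAB hx,
      comp_congr 𝒞 le_rfl hn (by omega) hAB rfl hx hy]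
  exact 𝒞.id_left hn B hy

lemma two_step_left (𝒞 : Compository) {m n k N p r : ℕ} (hm : k ≤ m) (hn : k ≤ n)
    (hN : m + n = N + k) (hp1 : k ≤ p) (hp2 : p ≤ n) (hr : r + k = m + p)
    (A : 𝒞.X.obj (op (sobj m))) (B : 𝒞.X.obj (op (sobj n)))
    (hAB : 𝒞.X.map (tgtHom k m hm).op A = 𝒞.X.map (srcHom k n hn).op B)
    (h1 : 𝒞.X.map (tgtHom k m hm).op A
      = 𝒞.X.map (srcHom k p hp1).op (𝒞.X.map (srcHom p n hp2).op B))
    (h2 : 𝒞.X.map (tgtHom p r (by omega)).op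
      (𝒞.comp hm hp1 (show m + p = r + k by omega) A (𝒞.X.map (srcHom p n hp2).op B) h1)
      = 𝒞.X.map (srcHom p n hp2).op B) :
    𝒞.comp (show p ≤ r by omega) hp2 (show r + n = N + p by omega)
      (𝒞.comp hm hp1 (show m + p = r + k by omega) A
        (𝒞.X.map (srcHom p n hp2).op B) h1) B h2
    = 𝒞.comp hm hn hN A B hAB := by
  obtain ⟨i, rfl⟩ : ∃ i, p = k + i := ⟨p - k, by omega⟩
  obtain rfl : r = m + i := by omega
  have hs := src_gen 𝒞 hm hn hN hp1 hp2 hr A B hAB h1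
  refine Eq.trans (comp_congr 𝒞 _ hp2 _ hs.symm rfl h2 (hs ▸ h2)) ?_
  exact 𝒞.back_forth_left hm hn hN i (by omega) A B hAB _

lemma two_step_right (𝒞 : Compository) {m n k N q r : ℕ} (hm : k ≤ m) (hn : k ≤ n)
    (hN : m + n = N + k) (hq1 : k ≤ q) (hq2 : q ≤ m) (hr : r + k = q + n)
    (A : 𝒞.X.obj (op (sobj m))) (B : 𝒞.X.obj (op (sobj n)))
    (hAB : 𝒞.X.map (tgtHom k m hm).op A = 𝒞.X.map (srcHom k n hn).op B)
    (h1 : 𝒞.X.map (tgtHom k q hq1).op (𝒞.X.map (tgtHom q m hq2).op A)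
      = 𝒞.X.map (srcHom k n hn).op B)
    (h2 : 𝒞.X.map (tgtHom q m hq2).op A
      = 𝒞.X.map (srcHom q r (by omega)).op (𝒞.comp hq1 hn (show q + n = r + k by omega)
        (𝒞.X.map (tgtHom q m hq2).op A) B h1)) :
    𝒞.comp hq2 (show q ≤ r by omega) (show m + r = N + q by omega) A
      (𝒞.comp hq1 hn (show q + n = r + k by omega)
        (𝒞.X.map (tgtHom q m hq2).op A) B h1) h2
    = 𝒞.comp hm hn hN A B hAB := by
  obtain ⟨i, rfl⟩ : ∃ i, q = k + i := ⟨q - k, by omega⟩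
  obtain rfl : r = n + i := by omega
  have hs := tgt_gen 𝒞 hm hn hN hq1 hq2 hr A B hAB h1
  refine Eq.trans (comp_congr 𝒞 hq2 _ _ rfl hs.symm h2 (hs ▸ h2)) ?_
  exact 𝒞.back_forth_right hm hn hN i (by omega) A B hAB _

end Compo

open Compo in
/-- associativity in a compository: for a `(j,k)`-composable triple
`(A, B, C)`, the pairs `(A, B ∘_k C)` and `(A ∘_j B, C)` are `j`- resp. `k`-composable,
and `A ∘_j (B ∘_k C) = (A ∘_j B) ∘_k C`. -/
theorem compository_assoc (𝒞 : Compository) {l m n j k M M' N : ℕ}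
    (hjl : j ≤ l) (hjm : j ≤ m) (hkm : k ≤ m) (hkn : k ≤ n)
    (hM : m + n = M + k) (hM' : l + m = M' + j) (hN : l + M = N + j)
    (A : 𝒞.X.obj (op (sobj l))) (B : 𝒞.X.obj (op (sobj m)))
    (C : 𝒞.X.obj (op (sobj n)))
    (hAB : 𝒞.X.map (tgtHom j l hjl).op A = 𝒞.X.map (srcHom j m hjm).op B)
    (hBC : 𝒞.X.map (tgtHom k m hkm).op B = 𝒞.X.map (srcHom k n hkn).op C) :
    (𝒞.X.map (tgtHom j l hjl).op A
      = 𝒞.X.map (srcHom j M (by omega)).op (𝒞.comp hkm hkn hM B C hBC)) ∧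
    (𝒞.X.map (tgtHom k M' (by omega)).op (𝒞.comp hjl hjm hM' A B hAB)
      = 𝒞.X.map (srcHom k n hkn).op C) ∧
    (∀ (h₁ : 𝒞.X.map (tgtHom j l hjl).op A
        = 𝒞.X.map (srcHom j M (by omega)).op (𝒞.comp hkm hkn hM B C hBC))
      (h₂ : 𝒞.X.map (tgtHom k M' (by omega)).op (𝒞.comp hjl hjm hM' A B hAB)
        = 𝒞.X.map (srcHom k n hkn).op C),
      𝒞.comp hjl (show j ≤ M by omega) hN A (𝒞.comp hkm hkn hM B C hBC) h₁
      = 𝒞.comp (show k ≤ M' by omega) hkn (show M' + n = N + k by omega)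
          (𝒞.comp hjl hjm hM' A B hAB) C h₂) := by
  set D := 𝒞.comp hkm hkn hM B C hBC with hD
  set E := 𝒞.comp hjl hjm hM' A B hAB with hE
  have hmM : m ≤ M := by omega
  have hmM' : m ≤ M' := by omega
  have hsD : 𝒞.X.map (srcHom m M hmM).op D = B := fact_src 𝒞 hkm hkn hM B C hBC
  have htE : 𝒞.X.map (tgtHom m M' hmM').op E = B := fact_tgt 𝒞 hjl hjm hM' A B hAB
  refine ⟨?_, ?_, ?_⟩
  · rw [show (srcHom j M (by omega) : sobj j ⟶ sobj M)
        = srcHom j m hjm ≫ srcHom m M hmM from (srcHom_comp hjm hmM).symm,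
      op_comp, FunctorToTypes.map_comp_apply, hsD]
    exact hAB
  · rw [show (tgtHom k M' (by omega) : sobj k ⟶ sobj M')
        = tgtHom k m hkm ≫ tgtHom m M' hmM' from (tgtHom_comp hkm hmM').symm,
      op_comp, FunctorToTypes.map_comp_apply, htE]
    exact hBC
  · intro h₁ h₂
    have hy2 : 𝒞.X.map (tgtHom m M' hmM').op E = 𝒞.X.map (srcHom m M hmM).op D :=
      htE.trans hsD.symm
    -- left side
    have hx : 𝒞.X.map (tgtHom j l hjl).op A
        = 𝒞.X.map (srcHom j m hjm).op (𝒞.X.map (srcHom m M hmM).op D) := by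
      rw [hsD]; exact hAB
    have hy : 𝒞.X.map (tgtHom m M' (by omega)).op
          (𝒞.comp hjl hjm (by omega) A (𝒞.X.map (srcHom m M hmM).op D) hx)
        = 𝒞.X.map (srcHom m M hmM).op D :=
      fact_tgt 𝒞 hjl hjm (by omega) A _ hx
    -- right side
    have hu : 𝒞.X.map (tgtHom k m hkm).op (𝒞.X.map (tgtHom m M' hmM').op E)
        = 𝒞.X.map (srcHom k n hkn).op C := by
      rw [htE]; exact hBC
    have hv : 𝒞.X.map (tgtHom m M' hmM').op E
        = 𝒞.X.map (srcHom m M (by omega)).op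
            (𝒞.comp hkm hkn (by omega) (𝒞.X.map (tgtHom m M' hmM').op E) C hu) :=
      (fact_src 𝒞 hkm hkn (by omega) _ C hu).symm
    calc
      𝒞.comp hjl (show j ≤ M by omega) hN A D h₁
          = 𝒞.comp hmM' hmM (show M' + M = N + m by omega)
              (𝒞.comp hjl hjm (show l + m = M' + j by omega) A
                (𝒞.X.map (srcHom m M hmM).op D) hx) D hy :=
        (two_step_left 𝒞 hjl (by omega) hN hjm hmM (by omega) A D h₁ hx hy).symm
      _ = 𝒞.comp hmM' hmM (show M' + M = N + m by omega) E D hy2 :=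
        comp_congr 𝒞 hmM' hmM _
          (comp_congr 𝒞 hjl hjm _ rfl hsD hx hAB) rfl hy hy2
      _ = 𝒞.comp hmM' hmM (show M' + M = N + m by omega) E
            (𝒞.comp hkm hkn (show m + n = M + k by omega)
              (𝒞.X.map (tgtHom m M' hmM').op E) C hu) hv :=
        comp_congr 𝒞 hmM' hmM _ rfl
          (comp_congr 𝒞 hkm hkn _ htE rfl hu hBC).symm hy2 hv
      _ = 𝒞.comp (show k ≤ M' by omega) hkn (show M' + n = N + k by omega) E C h₂ :=
        two_step_right 𝒞 (by omega) hkn (by omega) hkm hmM' (by omega) E C h₂ hu hv
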